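/- Second derivative of the normalising constant (Proposition 1, second order): Let π be a probability measure on a measurable space Θ and let L : Θ → ℝ be measurable with 0 < L(θ) ≤ C for all θ. Then for every a₀ > 0 the function a ↦ ∫_Θ L(θ)^{a} log L(θ) dπ(θ) is differentiable at a₀ with derivative ∫_Θ L(θ)^{a₀} (log L(θ))² dπ(θ); i.e. c(a) = ∫_Θ L(θ)^{a} dπ(θ) is twice differentiable on (0,∞) with c″(a₀) = ∫_Θ L(θ)^{a₀} (log L(θ))² dπ(θ) ≥ 0. -/

import Mathlib

open MeasureTheory

lemma rpow_mul_log_sq_le {x b : ℝ} (hx : 0 < x) (hx1 : x ≤ 1) (hb : 0 < b) :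
    x ^ b * (Real.log x) ^ 2 ≤ (2 / b) ^ 2 := by
  have h := Real.abs_log_mul_self_rpow_lt x (b / 2) hx hx1 (by positivity)
  have hxb : x ^ b = x ^ (b / 2) * x ^ (b / 2) := by
    rw [← Real.rpow_add hx]; ring_nf
  have h2 : x ^ b * (Real.log x) ^ 2 = |Real.log x * x ^ (b / 2)| ^ 2 := by
    rw [sq_abs, hxb]; ring
  rw [h2]
  have h3 : (1 : ℝ) / (b / 2) = 2 / b := by field_simp
  have := pow_le_pow_left₀ (abs_nonneg _) (le_of_lt (h3 ▸ h)) 2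
  calc |Real.log x * x ^ (b / 2)| ^ 2 ≤ (2 / b) ^ 2 := this

/-- Second derivative of the normalising constant (Proposition 1, second order):
for `0 < L θ ≤ C` and `a₀ > 0`, the map `a ↦ ∫ θ, L θ ^ a * log (L θ) ∂π` is
differentiable at `a₀` with derivative `∫ θ, L θ ^ a₀ * (log (L θ))² ∂π`, which
is nonnegative. -/
theorem power_prior_normalising_constant_second_deriv
    {Θ : Type*} [MeasurableSpace Θ] (π : Measure Θ) [IsProbabilityMeasure π]
    (L : Θ → ℝ) (hL : Measurable L) (C : ℝ)
    (hbound : ∀ θ, 0 < L θ ∧ L θ ≤ C)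
    (a₀ : ℝ) (ha₀ : 0 < a₀) :
    HasDerivAt (fun a : ℝ => ∫ θ, L θ ^ a * Real.log (L θ) ∂π)
      (∫ θ, L θ ^ a₀ * (Real.log (L θ)) ^ 2 ∂π) a₀ ∧
    0 ≤ ∫ θ, L θ ^ a₀ * (Real.log (L θ)) ^ 2 ∂π := by
  set D := max C 1 with hD
  have hD1 : (1 : ℝ) ≤ D := le_max_right _ _
  have hLD : ∀ θ, L θ ≤ D := fun θ => (hbound θ).2.trans (le_max_left _ _)
  set K : ℝ := (4 / a₀) ^ 2 + D ^ (2 * a₀) * (Real.log D) ^ 2 with hK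
  have key : HasDerivAt (fun a : ℝ => ∫ θ, L θ ^ a * Real.log (L θ) ∂π)
      (∫ θ, L θ ^ a₀ * (Real.log (L θ)) ^ 2 ∂π) a₀ := by
    have hrpow : ∀ a : ℝ, Measurable (fun θ => L θ ^ a) := by
      intro a
      have : (fun θ => L θ ^ a) = fun θ => Real.exp (Real.log (L θ) * a) :=
        funext fun θ => Real.rpow_def_of_pos (hbound θ).1 a
      rw [this]
      exact (hL.log.mul_const a).exp
    have hmeas : ∀ a : ℝ, AEStronglyMeasurable (fun θ => L θ ^ a * Real.log (L θ)) π :=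
      fun a => ((hrpow a).mul (hL.log)).aestronglyMeasurable
    have hmeas' : AEStronglyMeasurable (fun θ => L θ ^ a₀ * (Real.log (L θ)) ^ 2) π :=
      ((hrpow a₀).mul (hL.log.pow_const 2)).aestronglyMeasurable
    have hε : (0 : ℝ) < a₀ / 2 := by linarith
    have hint : Integrable (fun θ => L θ ^ a₀ * Real.log (L θ)) π := by
      refine (integrable_const (1 / a₀ + D ^ a₀ * Real.log D)).mono' (hmeas a₀) ?_
      filter_upwards with θ
      obtain ⟨hx, _⟩ := hbound θ
      rw [Real.norm_eq_abs, abs_mul, abs_of_nonneg (Real.rpow_nonneg hx.le _)]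
      rcases le_or_gt (L θ) 1 with h1 | h1
      · have := Real.abs_log_mul_self_rpow_lt (L θ) a₀ hx h1 ha₀
        have hnn : 0 ≤ D ^ a₀ * Real.log D := by
          have := Real.log_nonneg hD1
          positivity
        have heq : L θ ^ a₀ * |Real.log (L θ)| = |Real.log (L θ) * L θ ^ a₀| := by
          rw [abs_mul, abs_of_nonneg (Real.rpow_nonneg hx.le _)]; ring
        linarith
      · have hlog : |Real.log (L θ)| ≤ Real.log D := by
          rw [abs_of_nonneg (Real.log_nonneg h1.le)]
          exact Real.log_le_log (by linarith) (hLD θ)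
        have hpow : L θ ^ a₀ ≤ D ^ a₀ := Real.rpow_le_rpow hx.le (hLD θ) ha₀.le
        have h1' : 0 ≤ Real.log D := Real.log_nonneg hD1
        have h2 : L θ ^ a₀ * |Real.log (L θ)| ≤ D ^ a₀ * Real.log D :=
          mul_le_mul hpow hlog (abs_nonneg _)
            (Real.rpow_nonneg (le_trans zero_le_one hD1) _)
        have h3 : 0 < 1 / a₀ := by positivity
        linarith
    have h_bound : ∀ᵐ θ ∂π, ∀ a ∈ Metric.ball a₀ (a₀ / 2),
        ‖L θ ^ a * (Real.log (L θ)) ^ 2‖ ≤ K := by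
      filter_upwards with θ a ha
      obtain ⟨hx, _⟩ := hbound θ
      rw [Metric.mem_ball, Real.dist_eq, abs_lt] at ha
      have ha1 : a₀ / 2 ≤ a := by linarith
      have ha2 : a ≤ 2 * a₀ := by linarith
      rw [Real.norm_eq_abs, abs_of_nonneg (by positivity)]
      rcases le_or_gt (L θ) 1 with h1 | h1
      · have hx1 : L θ ^ a ≤ L θ ^ (a₀ / 2) :=
          Real.rpow_le_rpow_of_exponent_ge hx h1 ha1
        have hb := rpow_mul_log_sq_le hx h1 (by positivity : (0:ℝ) < a₀ / 2)
        have h42 : (2 / (a₀ / 2)) = 4 / a₀ := by field_simp; ring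
        have hnn : 0 ≤ D ^ (2 * a₀) * (Real.log D) ^ 2 := by
          have := Real.log_nonneg hD1; positivity
        rw [h42] at hb
        have h2 : L θ ^ a * Real.log (L θ) ^ 2 ≤ L θ ^ (a₀ / 2) * Real.log (L θ) ^ 2 :=
          mul_le_mul_of_nonneg_right hx1 (sq_nonneg _)
        rw [hK]
        linarith
      · have hlog : (Real.log (L θ)) ^ 2 ≤ (Real.log D) ^ 2 := by
          have h1' : 0 ≤ Real.log (L θ) := Real.log_nonneg h1.le
          have : Real.log (L θ) ≤ Real.log D := Real.log_le_log (by linarith) (hLD θ)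
          nlinarith
        have hpow : L θ ^ a ≤ D ^ (2 * a₀) :=
          le_trans (Real.rpow_le_rpow hx.le (hLD θ) (by linarith))
            (Real.rpow_le_rpow_of_exponent_le hD1 ha2)
        have h0 : (0:ℝ) ≤ (4 / a₀) ^ 2 := by positivity
        have h2 : L θ ^ a * Real.log (L θ) ^ 2 ≤ D ^ (2 * a₀) * Real.log D ^ 2 :=
          mul_le_mul hpow hlog (sq_nonneg _)
            (Real.rpow_nonneg (le_trans zero_le_one hD1) _)
        rw [hK]
        linarith
    have h_diff : ∀ᵐ θ ∂π, ∀ a ∈ Metric.ball a₀ (a₀ / 2),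
        HasDerivAt (fun a => L θ ^ a * Real.log (L θ))
          (L θ ^ a * (Real.log (L θ)) ^ 2) a := by
      filter_upwards with θ a _
      have := ((Real.hasStrictDerivAt_const_rpow (hbound θ).1 a).hasDerivAt).mul_const
        (Real.log (L θ))
      rw [show L θ ^ a * Real.log (L θ) ^ 2 = L θ ^ a * Real.log (L θ) * Real.log (L θ) by ring]
      exact this
    exact (hasDerivAt_integral_of_dominated_loc_of_deriv_le (Metric.ball_mem_nhds a₀ hε)
      (Filter.Eventually.of_forall hmeas) hint hmeas' h_bound
      (integrable_const K) h_diff).2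
  refine ⟨key, integral_nonneg fun θ => ?_⟩
  have := (hbound θ).1
  positivity
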